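/- Let v be a concave (reflex) vertex of a polygon with neighbouring vertices v₁ and v₂, let y₁ ∈ [v, v₁], y₂ ∈ [v, v₂] with ‖y₁−v‖ = ‖y₂−v‖ = δ > 0, and let x be an interior point of the polygon sufficiently close to v not lying on either of the lines through [v,v₁] or [v,v₂]. Let α₁(x), α₂(x) be the angles at x of the triangles [x, y₁, v] and [x, v, y₂], and τ₁(x), τ₂(x) ∈ {−1, 1} the signs of the signed distances of x to the lines through these segments (with respect to outward normals of the polygon). Then τ₁(x)α₁(x) + τ₂(x)α₂(x) = α_{[y₁,y₂]}(x), the angle at x of the triangle [x, y₁, y₂]. -/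

import Mathlib

open Real EuclideanGeometry

section Helpers

variable {V : Type*} [NormedAddCommGroup V] [InnerProductSpace ℝ V]

lemma indep_ne_pi [Fact (Module.finrank ℝ V = 2)] (o : Orientation ℝ V (Fin 2)) {a c : V}
    (h : LinearIndependent ℝ ![a, c]) : o.oangle a c ≠ 0 ∧ o.oangle a c ≠ π := by
  have ha : a ≠ 0 := h.ne_zero 0
  have hc : c ≠ 0 := h.ne_zero 1
  constructor
  · intro h0
    rw [Orientation.oangle_eq_zero_iff_sameRay] at h0
    obtain ⟨r₁, r₂, hr₁, hr₂, hr⟩ := h0.exists_pos ha hc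
    have : r₁ • a + (-r₂) • c = 0 := by rw [neg_smul, hr]; abel
    exact hr₁.ne' ((LinearIndependent.pair_iff.mp h r₁ (-r₂) this).1)
  · intro h0
    rw [Orientation.oangle_eq_pi_iff_sameRay_neg] at h0
    obtain ⟨r₁, r₂, hr₁, hr₂, hr⟩ := h0.2.2.exists_pos ha (neg_ne_zero.mpr hc)
    have : r₁ • a + r₂ • c = 0 := by rw [smul_neg] at hr; rw [hr]; abel
    exact hr₁.ne' ((LinearIndependent.pair_iff.mp h r₁ r₂ this).1)

lemma toReal_pos_of_sign_ne_zero {θ : Real.Angle} (h : θ.sign ≠ 0) (hn : ¬ θ.toReal < 0) :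
    0 < θ.toReal ∧ θ.toReal < π := by
  have h' : ¬ (θ = 0 ∨ θ = π) := fun hc => h (Real.Angle.sign_eq_zero_iff.mpr hc)
  push_neg at h'
  refine ⟨lt_of_le_of_ne (not_lt.mp hn) ?_, lt_of_le_of_ne θ.toReal_le_pi ?_⟩
  · exact fun e => h'.1 (Real.Angle.toReal_eq_zero_iff.mp e.symm)
  · exact fun e => h'.2 (Real.Angle.toReal_eq_pi_iff.mp e)

lemma int_zero_of_mul_two_pi_bounds {k : ℤ} (h1 : -(2*π) < 2*π*(k:ℝ)) (h2 : 2*π*(k:ℝ) < 2*π) :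
    k = 0 := by
  have hpi := Real.pi_pos
  have hlb : (-1 : ℤ) < k := by
    by_contra hc
    push_neg at hc
    have hc' : (k : ℝ) ≤ -1 := by exact_mod_cast hc
    have := mul_le_mul_of_nonneg_left hc' (by positivity : (0:ℝ) ≤ 2*π)
    nlinarith
  have hub : k < 1 := by
    by_contra hc
    push_neg at hc
    have hc' : (1 : ℝ) ≤ k := by exact_mod_cast hc
    have := mul_le_mul_of_nonneg_left hc' (by positivity : (0:ℝ) ≤ 2*π)
    nlinarith
  omega

/-- Additivity of unoriented angles when the middle vector is a positive combination
of the outer two linearly independent vectors. -/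
lemma angle_add_of_pos_combo [Fact (Module.finrank ℝ V = 2)] (o : Orientation ℝ V (Fin 2))
    {a c : V} (h : LinearIndependent ℝ ![a, c]) {s t : ℝ} (hs : 0 < s) (ht : 0 < t) :
    InnerProductGeometry.angle a (s • a + t • c) + InnerProductGeometry.angle (s • a + t • c) c
      = InnerProductGeometry.angle a c := by
  have ha : a ≠ 0 := h.ne_zero 0
  have hc : c ≠ 0 := h.ne_zero 1
  have hb : s • a + t • c ≠ 0 := fun h0 => hs.ne' (LinearIndependent.pair_iff.mp h s t h0).1
  have hne := indep_ne_pi o h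
  have hsne : (o.oangle a c).sign ≠ 0 := by
    intro h0
    rcases Real.Angle.sign_eq_zero_iff.mp h0 with h0 | h0
    exacts [hne.1 h0, hne.2 h0]
  have hadd : o.oangle a (s • a + t • c) + o.oangle (s • a + t • c) c = o.oangle a c :=
    o.oangle_add ha hb hc
  have hsign1 : (o.oangle a (s • a + t • c)).sign = (o.oangle a c).sign := by
    rw [o.oangle_sign_smul_add_smul_right a c s t, _root_.sign_pos ht, one_mul]
  have hsign2 : (o.oangle (s • a + t • c) c).sign = (o.oangle a c).sign := by
    rw [o.oangle_sign_smul_add_smul_left a c s t, _root_.sign_pos hs, one_mul]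
  set x₁ := (o.oangle a (s • a + t • c)).toReal with hx₁
  set x₂ := ((o.oangle (s • a + t • c) c)).toReal with hx₂
  set x₃ := (o.oangle a c).toReal with hx₃
  have hcoe : ((x₁ + x₂ : ℝ) : Real.Angle) = ((x₃ : ℝ) : Real.Angle) := by
    rw [Real.Angle.coe_add, hx₁, hx₂, hx₃, Real.Angle.coe_toReal, Real.Angle.coe_toReal,
      Real.Angle.coe_toReal, hadd]
  obtain ⟨k, hk⟩ := Real.Angle.angle_eq_iff_two_pi_dvd_sub.mp hcoe
  have hpi := Real.pi_pos
  have hneg_iff1 : x₁ < 0 ↔ x₃ < 0 := by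
    rw [hx₁, hx₃, Real.Angle.toReal_neg_iff_sign_neg, Real.Angle.toReal_neg_iff_sign_neg, hsign1]
  have hneg_iff2 : x₂ < 0 ↔ x₃ < 0 := by
    rw [hx₂, hx₃, Real.Angle.toReal_neg_iff_sign_neg, Real.Angle.toReal_neg_iff_sign_neg, hsign2]
  have hl₁ := Real.Angle.neg_pi_lt_toReal (o.oangle a (s • a + t • c))
  have hl₂ := Real.Angle.neg_pi_lt_toReal (o.oangle (s • a + t • c) c)
  have hl₃ := Real.Angle.neg_pi_lt_toReal (o.oangle a c)
  have hu₁ := Real.Angle.toReal_le_pi (o.oangle a (s • a + t • c))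
  have hu₂ := Real.Angle.toReal_le_pi ((o.oangle (s • a + t • c) c))
  have hu₃ := Real.Angle.toReal_le_pi (o.oangle a c)
  rw [o.angle_eq_abs_oangle_toReal ha hb, o.angle_eq_abs_oangle_toReal hb hc,
    o.angle_eq_abs_oangle_toReal ha hc, ← hx₁, ← hx₂, ← hx₃]
  by_cases hneg : x₃ < 0
  · have h1 := hneg_iff1.mpr hneg
    have h2 := hneg_iff2.mpr hneg
    have hk0 : k = 0 := by
      refine int_zero_of_mul_two_pi_bounds ?_ ?_ <;> rw [← hk] <;> linarith
    rw [hk0] at hk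
    push_cast at hk
    rw [abs_of_neg h1, abs_of_neg h2, abs_of_neg hneg]
    linarith
  · have hsne1 : (o.oangle a (s • a + t • c)).sign ≠ 0 := by rw [hsign1]; exact hsne
    have hsne2 : (o.oangle (s • a + t • c) c).sign ≠ 0 := by rw [hsign2]; exact hsne
    obtain ⟨hp₃, hq₃⟩ := toReal_pos_of_sign_ne_zero hsne hneg
    obtain ⟨hp₁, hq₁⟩ := toReal_pos_of_sign_ne_zero hsne1 (fun hh => hneg (hneg_iff1.mp hh))
    obtain ⟨hp₂, hq₂⟩ := toReal_pos_of_sign_ne_zero hsne2 (fun hh => hneg (hneg_iff2.mp hh))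
    have hk0 : k = 0 := by
      refine int_zero_of_mul_two_pi_bounds ?_ ?_ <;> rw [← hk] <;> linarith
    rw [hk0] at hk
    push_cast at hk
    rw [abs_of_pos hp₁, abs_of_pos hp₂, abs_of_pos hp₃]
    linarith

lemma collinear_of_rel {a b c : V} (r : ℝ) (h : a - b = r • (c - b)) :
    Collinear ℝ ({a, b, c} : Set V) := by
  refine (collinear_iff_of_mem (show b ∈ ({a, b, c} : Set V) from
    Or.inr (Or.inl rfl))).mpr ⟨c - b, ?_⟩
  intro p hp
  simp only [Set.mem_insert_iff, Set.mem_singleton_iff] at hp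
  rcases hp with rfl | rfl | rfl
  · exact ⟨r, by rw [vadd_eq_add, ← h]; abel⟩
  · exact ⟨0, by simp [vadd_eq_add]⟩
  · exact ⟨1, by rw [vadd_eq_add, one_smul]; abel⟩

lemma indep_sub_of_not_collinear {a b c : V} (h : ¬ Collinear ℝ ({a, b, c} : Set V)) :
    LinearIndependent ℝ ![a - b, c - b] := by
  rw [LinearIndependent.pair_iff]
  intro s t hst
  by_contra hcon
  apply h
  rcases not_and_or.mp hcon with hs | ht
  · have h2 : s • (a - b) = (-t) • (c - b) := by
      rw [neg_smul]
      exact eq_neg_of_add_eq_zero_left hst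
    have h3 : a - b = (s⁻¹ * (-t)) • (c - b) := by
      have := congrArg (fun z => s⁻¹ • z) h2
      simpa [smul_smul, inv_mul_cancel₀ hs] using this
    exact collinear_of_rel _ h3
  · have h2 : t • (c - b) = (-s) • (a - b) := by
      rw [neg_smul]
      exact eq_neg_of_add_eq_zero_right hst
    have h3 : c - b = (t⁻¹ * (-s)) • (a - b) := by
      have := congrArg (fun z => t⁻¹ • z) h2
      simpa [smul_smul, inv_mul_cancel₀ ht] using this
    have hcl : Collinear ℝ ({c, b, a} : Set V) := collinear_of_rel _ h3
    have hset : ({c, b, a} : Set V) = {a, b, c} := by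
      ext z
      simp only [Set.mem_insert_iff, Set.mem_singleton_iff]
      tauto
    rwa [hset] at hcl

lemma indep_combo {u₁ u₂ : V} (h : LinearIndependent ℝ ![u₁, u₂]) {p q r s : ℝ}
    (hdet : p * s - q * r ≠ 0) :
    LinearIndependent ℝ ![p • u₁ + q • u₂, r • u₁ + s • u₂] := by
  rw [LinearIndependent.pair_iff] at h ⊢
  intro c₁ c₂ hc
  have h1 : (c₁ * p + c₂ * r) • u₁ + (c₁ * q + c₂ * s) • u₂ = 0 := by
    rw [← hc]; module
  obtain ⟨e₁, e₂⟩ := h _ _ h1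
  constructor
  · have hc1 : c₁ * (p * s - q * r) = 0 := by linear_combination s * e₁ - r * e₂
    exact (mul_eq_zero.mp hc1).resolve_right hdet
  · have hc2 : c₂ * (p * s - q * r) = 0 := by linear_combination p * e₂ - q * e₁
    exact (mul_eq_zero.mp hc2).resolve_right hdet

end Helpers

/-- At a concave (reflex) vertex `v` of a polygon, locally the exterior is the cone
spanned at `v` by the directions of the two adjacent edge points `y₁, y₂` (at distance
`δ` from `v`), and the outward unit normals `n₁, n₂` of the edges `[y₁,v]`, `[v,y₂]`
point into this exterior cone. For any interior point `x` (i.e. off the closed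
exterior cone) sufficiently close to `v`, not lying on either edge line,
`τ₁(x)·α₁(x) + τ₂(x)·α₂(x) = α_{[y₁,y₂]}(x)`, where `τⱼ(x)` is the sign of the
signed distance of `x` to the corresponding edge line and `αⱼ(x)` are the angles
at `x` of the triangles `[x,y₁,v]` and `[x,v,y₂]`. -/
theorem concave_vertex_signed_angle_identity
    (v y₁ y₂ n₁ n₂ : EuclideanSpace ℝ (Fin 2)) (δ : ℝ) (hδ : 0 < δ)
    (hd₁ : ‖y₁ - v‖ = δ) (hd₂ : ‖y₂ - v‖ = δ)
    (hcol : ¬ Collinear ℝ ({y₁, v, y₂} : Set (EuclideanSpace ℝ (Fin 2))))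
    (hn₁ : ‖n₁‖ = 1) (hn₁perp : (inner ℝ n₁ (v - y₁) : ℝ) = 0)
    (hn₁out : (0 : ℝ) < inner ℝ n₁ (y₂ - v))
    (hn₂ : ‖n₂‖ = 1) (hn₂perp : (inner ℝ n₂ (y₂ - v) : ℝ) = 0)
    (hn₂out : (0 : ℝ) < inner ℝ n₂ (y₁ - v)) :
    ∃ r > 0, ∀ x : EuclideanSpace ℝ (Fin 2), ‖x - v‖ < r →
      x ∉ {p | ∃ s t : ℝ, 0 ≤ s ∧ 0 ≤ t ∧ p = v + s • (y₁ - v) + t • (y₂ - v)} →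
      ¬ Collinear ℝ ({x, y₁, v} : Set (EuclideanSpace ℝ (Fin 2))) →
      ¬ Collinear ℝ ({x, v, y₂} : Set (EuclideanSpace ℝ (Fin 2))) →
      Real.sign (inner ℝ (v - x) n₁) * EuclideanGeometry.angle y₁ x v +
        Real.sign (inner ℝ (v - x) n₂) * EuclideanGeometry.angle v x y₂ =
          EuclideanGeometry.angle y₁ x y₂ := by
  classical
  haveI : Fact (Module.finrank ℝ (EuclideanSpace ℝ (Fin 2)) = 2) := ⟨finrank_euclideanSpace_fin⟩
  set o : Orientation ℝ (EuclideanSpace ℝ (Fin 2)) (Fin 2) :=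
    (EuclideanSpace.basisFun (Fin 2) ℝ).toBasis.orientation with ho
  have hu : LinearIndependent ℝ ![y₁ - v, y₂ - v] := indep_sub_of_not_collinear hcol
  let bb : Module.Basis (Fin 2) ℝ (EuclideanSpace ℝ (Fin 2)) :=
    basisOfLinearIndependentOfCardEqFinrank hu (by simp [finrank_euclideanSpace_fin])
  have hbbc : ⇑bb = ![y₁ - v, y₂ - v] := coe_basisOfLinearIndependentOfCardEqFinrank hu _
  have hbb0 : bb 0 = y₁ - v := by rw [hbbc]; rfl
  have hbb1 : bb 1 = y₂ - v := by rw [hbbc]; rfl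
  have hfc : Continuous fun w => bb.equivFun w :=
    bb.equivFun.toLinearMap.continuous_of_finiteDimensional
  obtain ⟨r, hr0, hrb⟩ := Metric.continuousAt_iff.mp (hfc.continuousAt (x := 0)) 1 one_pos
  refine ⟨r, hr0, fun x hxr hxcone hc1 hc2 => ?_⟩
  set A := bb.equivFun (x - v) 0 with hA
  set B := bb.equivFun (x - v) 1 with hBdef
  have hxv : A • (y₁ - v) + B • (y₂ - v) = x - v := by
    have hsum := bb.sum_equivFun (x - v)
    rwa [Fin.sum_univ_two, hbb0, hbb1] at hsum
  have hx : x = v + A • (y₁ - v) + B • (y₂ - v) := by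
    rw [add_assoc, hxv]; abel
  -- coordinate bounds
  have hnormlt : ‖bb.equivFun (x - v)‖ < 1 := by
    have hd : dist (x - v) 0 < r := by simpa [dist_eq_norm] using hxr
    have hball := hrb hd
    rwa [dist_eq_norm, map_zero, sub_zero] at hball
  have hAb : |A| < 1 := by
    have := norm_le_pi_norm (bb.equivFun (x - v)) 0
    rw [Real.norm_eq_abs] at this
    exact lt_of_le_of_lt this hnormlt
  have hBb : |B| < 1 := by
    have := norm_le_pi_norm (bb.equivFun (x - v)) 1
    rw [Real.norm_eq_abs] at this
    exact lt_of_le_of_lt this hnormlt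
  have hA1 : A < 1 := (abs_lt.mp hAb).2
  have hB1 : B < 1 := (abs_lt.mp hBb).2
  -- nonvanishing of coordinates
  have hBne : B ≠ 0 := by
    intro h0
    apply hc1
    have hrel : x - v = A • (y₁ - v) := by rw [← hxv, h0, zero_smul, add_zero]
    have hcl : Collinear ℝ ({x, v, y₁} : Set (EuclideanSpace ℝ (Fin 2))) :=
      collinear_of_rel A hrel
    rwa [Set.pair_comm v y₁] at hcl
  have hAne : A ≠ 0 := by
    intro h0
    apply hc2
    have hrel : x - v = B • (y₂ - v) := by rw [← hxv, h0, zero_smul, zero_add]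
    exact collinear_of_rel B hrel
  have hnotboth : ¬ (0 ≤ A ∧ 0 ≤ B) := fun ⟨ha, hb⟩ => hxcone ⟨A, B, ha, hb, hx⟩
  -- inner products with the normals
  have hn1u1 : (inner ℝ n₁ (y₁ - v) : ℝ) = 0 := by
    rw [show y₁ - v = -(v - y₁) from by abel, inner_neg_right, hn₁perp, neg_zero]
  have hvx : v - x = (-A) • (y₁ - v) + (-B) • (y₂ - v) := by rw [hx]; module
  have hs₁ : (inner ℝ (v - x) n₁ : ℝ) = -B * inner ℝ n₁ (y₂ - v) := by
    rw [real_inner_comm, hvx, inner_add_right, real_inner_smul_right, real_inner_smul_right,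
      hn1u1]
    ring
  have hs₂ : (inner ℝ (v - x) n₂ : ℝ) = -A * inner ℝ n₂ (y₁ - v) := by
    rw [real_inner_comm, hvx, inner_add_right, real_inner_smul_right, real_inner_smul_right,
      hn₂perp]
    ring
  have ang_def : ∀ p q : EuclideanSpace ℝ (Fin 2),
      EuclideanGeometry.angle p x q = InnerProductGeometry.angle (p - x) (q - x) := fun _ _ => rfl
  -- linear expressions for the three difference vectors
  have e1 : (1 - A) • (y₁ - v) + (-B) • (y₂ - v) = y₁ - x := by rw [hx]; module
  have e2 : (-A) • (y₁ - v) + (1 - B) • (y₂ - v) = y₂ - x := by rw [hx]; module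
  have e0 : (-A) • (y₁ - v) + (-B) • (y₂ - v) = v - x := hvx.symm
  rcases hAne.lt_or_gt with hA0 | hA0 <;> rcases hBne.lt_or_gt with hB0 | hB0
  · -- A < 0, B < 0
    have hτ₁ : Real.sign (inner ℝ (v - x) n₁) = 1 := by
      rw [hs₁]; exact Real.sign_of_pos (mul_pos (by linarith) hn₁out)
    have hτ₂ : Real.sign (inner ℝ (v - x) n₂) = 1 := by
      rw [hs₂]; exact Real.sign_of_pos (mul_pos (by linarith) hn₂out)
    rw [hτ₁, hτ₂, one_mul, one_mul, ang_def, ang_def, ang_def]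
    have hD0 : (0:ℝ) < 1 - A - B := by linarith
    have hind : LinearIndependent ℝ ![y₁ - x, y₂ - x] := by
      have hdet : (1 - A) * (1 - B) - (-B) * (-A) ≠ 0 := by
        have : (1 - A) * (1 - B) - (-B) * (-A) = 1 - A - B := by ring
        rw [this]; exact hD0.ne'
      have := indep_combo hu hdet
      rwa [e1, e2] at this
    have hcomb : v - x = ((-A)/(1 - A - B)) • (y₁ - x) + ((-B)/(1 - A - B)) • (y₂ - x) := by
      rw [← e1, ← e2, ← e0]
      match_scalars <;> field_simp [hD0.ne'] <;> ring
    rw [hcomb]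
    exact angle_add_of_pos_combo o hind (div_pos (neg_pos.mpr hA0) hD0)
      (div_pos (neg_pos.mpr hB0) hD0)
  · -- A < 0, 0 < B
    have hτ₁ : Real.sign (inner ℝ (v - x) n₁) = -1 := by
      rw [hs₁]; exact Real.sign_of_neg (mul_neg_of_neg_of_pos (by linarith) hn₁out)
    have hτ₂ : Real.sign (inner ℝ (v - x) n₂) = 1 := by
      rw [hs₂]; exact Real.sign_of_pos (mul_pos (by linarith) hn₂out)
    rw [hτ₁, hτ₂, one_mul, ang_def, ang_def, ang_def]
    have hD0 : (0:ℝ) < 1 - A - B := by linarith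
    have hind : LinearIndependent ℝ ![v - x, y₂ - x] := by
      have hdet : (-A) * (1 - B) - (-B) * (-A) ≠ 0 := by
        have : (-A) * (1 - B) - (-B) * (-A) = -A := by ring
        rw [this]; exact (neg_pos.mpr hA0).ne'
      have := indep_combo hu hdet
      rwa [e0, e2] at this
    have hcomb : y₁ - x = ((1 - A - B)/(-A)) • (v - x) + (B/(-A)) • (y₂ - x) := by
      rw [← e0, ← e2, ← e1]
      match_scalars <;> field_simp [hAne] <;> ring
    have hadd := angle_add_of_pos_combo o hind
      (div_pos hD0 (neg_pos.mpr hA0)) (div_pos hB0 (neg_pos.mpr hA0))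
    rw [← hcomb] at hadd
    rw [InnerProductGeometry.angle_comm (y₁ - x) (v - x)]
    linarith
  · -- 0 < A, B < 0
    have hτ₁ : Real.sign (inner ℝ (v - x) n₁) = 1 := by
      rw [hs₁]; exact Real.sign_of_pos (mul_pos (by linarith) hn₁out)
    have hτ₂ : Real.sign (inner ℝ (v - x) n₂) = -1 := by
      rw [hs₂]; exact Real.sign_of_neg (mul_neg_of_neg_of_pos (by linarith) hn₂out)
    rw [hτ₁, hτ₂, one_mul, ang_def, ang_def, ang_def]
    have hD0 : (0:ℝ) < 1 - A - B := by linarith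
    have hind : LinearIndependent ℝ ![y₁ - x, v - x] := by
      have hdet : (1 - A) * (-B) - (-B) * (-A) ≠ 0 := by
        have : (1 - A) * (-B) - (-B) * (-A) = -B := by ring
        rw [this]; exact (neg_pos.mpr hB0).ne'
      have := indep_combo hu hdet
      rwa [e1, e0] at this
    have hcomb : y₂ - x = (A/(-B)) • (y₁ - x) + ((1 - A - B)/(-B)) • (v - x) := by
      rw [← e1, ← e0, ← e2]
      match_scalars <;> field_simp [hBne] <;> ring
    have hadd := angle_add_of_pos_combo o hind
      (div_pos hA0 (neg_pos.mpr hB0)) (div_pos hD0 (neg_pos.mpr hB0))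
    rw [← hcomb] at hadd
    rw [InnerProductGeometry.angle_comm (v - x) (y₂ - x)]
    linarith
  · exact absurd ⟨hA0.le, hB0.le⟩ hnotboth
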